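/- Let (G, γ) and (T, η) be countable sets equipped with binary relations (directed graphs), both unary FA-presentable, and let g ∈ G and t ∈ T be distinguished vertices. Let ~ be the equivalence relation on the disjoint union G ⊕ T generated by the single pair (inl g, inr t), and let A = (G ⊕ T)/~ carry the induced edge relation α, where α relates the class of u to the class of v if and only if there exist u' ~ u and v' ~ v that are both in G and related by γ, or both in T and related by η. Then the attachment (A, α) of (T, η) at t to the vertex g of (G, γ) is unary FA-presentable. -/

import Mathlib

/-- The convolution word of the pair `(m, n)`, over the three-letter alphabet `Fin 3`
(`0` plays the role of `s`, `1` of `l`, `2` of `r`). -/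
def convWord (m n : ℕ) : List (Fin 3) :=
  List.replicate (min m n) 0 ++ List.replicate (m - min m n) 1 ++
    List.replicate (n - min m n) 2

/-- The convolution language of a binary relation on `ℕ`. -/
def convLang (R : ℕ → ℕ → Prop) : Language (Fin 3) :=
  {w | ∃ m n, R m n ∧ w = convWord m n}

/-- A binary relation on `ℕ` is regular if its convolution language is regular. -/
def RegularRel (R : ℕ → ℕ → Prop) : Prop :=
  (convLang R).IsRegular
/-- The unary language over a one-letter alphabet associated to a set `L ⊆ ℕ`,
identifying `a^n` with `n`. -/
def unaryLang (L : Set ℕ) : Language Unit :=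
  {w | w.length ∈ L}

/-- A (countable) structure `(X, ρ)` with one binary relation is unary FA-presentable
if there are a set `L ⊆ ℕ` whose unary language is regular and a surjection
`φ : L → X` such that equality and the relation, pulled back along `φ`, are
regular relations. -/
def UnaryFAPresentable {X : Type*} (ρ : X → X → Prop) : Prop :=
  ∃ L : Set ℕ, (unaryLang L).IsRegular ∧
    ∃ φ : ℕ → X, (∀ x, ∃ n ∈ L, φ n = x) ∧
      RegularRel (fun m n => m ∈ L ∧ n ∈ L ∧ φ m = φ n) ∧
      RegularRel (fun m n => m ∈ L ∧ n ∈ L ∧ ρ (φ m) (φ n))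

/-- The equivalence relation on `G ⊕ T` generated by the single pair `(inl g, inr t)`. -/
def attachRel {G T : Type*} (g : G) (t : T) : (G ⊕ T) → (G ⊕ T) → Prop :=
  Relation.EqvGen (fun u v => u = Sum.inl g ∧ v = Sum.inr t)

/-- The corresponding setoid on `G ⊕ T`. -/
def attachSetoid {G T : Type*} (g : G) (t : T) : Setoid (G ⊕ T) :=
  ⟨attachRel g t, Relation.EqvGen.is_equivalence _⟩

/-- The edge relation on the attachment of `(T, η)` at `t` to the vertex `g` of
`(G, γ)`: classes are related iff they contain representatives that are both in
`G` and `γ`-related, or both in `T` and `η`-related. -/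
def attachEdge {G T : Type*} (γ : G → G → Prop) (η : T → T → Prop) (g : G) (t : T)
    (a b : Quotient (attachSetoid g t)) : Prop :=
  (∃ u v : G, Quotient.mk (attachSetoid g t) (Sum.inl u) = a ∧
    Quotient.mk (attachSetoid g t) (Sum.inl v) = b ∧ γ u v) ∨
  (∃ u v : T, Quotient.mk (attachSetoid g t) (Sum.inr u) = a ∧
    Quotient.mk (attachSetoid g t) (Sum.inr v) = b ∧ η u v)

namespace Stmt7Aux


open List

theorem evalFrom_dead {α β : Type} (M : DFA α (Option β)) (h : ∀ a, M.step none a = none)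
    (w : List α) : M.evalFrom none w = none := by
  induction w with
  | nil => rfl
  | cons a w ih =>
    show M.evalFrom (M.step none a) w = none
    rw [h]; exact ih


open List

theorem prod_evalFrom {α σ₁ σ₂ : Type} (M₁ : DFA α σ₁) (M₂ : DFA α σ₂)
    (acc : Set (σ₁ × σ₂)) (w : List α) (s₁ : σ₁) (s₂ : σ₂) :
    (DFA.mk (fun s a => (M₁.step s.1 a, M₂.step s.2 a)) (M₁.start, M₂.start)
      acc).evalFrom (s₁, s₂) w = (M₁.evalFrom s₁ w, M₂.evalFrom s₂ w) := by
  induction w generalizing s₁ s₂ with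
  | nil => rfl
  | cons a w ih =>
    simp only [DFA.evalFrom, List.foldl_cons] at *
    exact ih _ _

/-- Union of regular languages is regular (product DFA). -/
theorem isRegular_union {α : Type} {L₁ L₂ : Language α}
    (h₁ : L₁.IsRegular) (h₂ : L₂.IsRegular) : (L₁ + L₂).IsRegular := by
  obtain ⟨σ₁, _, M₁, rfl⟩ := h₁
  obtain ⟨σ₂, _, M₂, rfl⟩ := h₂
  refine ⟨σ₁ × σ₂, inferInstance,
    DFA.mk (fun s a => (M₁.step s.1 a, M₂.step s.2 a)) (M₁.start, M₂.start)
      {s | s.1 ∈ M₁.accept ∨ s.2 ∈ M₂.accept}, ?_⟩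
  ext w
  rw [Language.mem_add, DFA.mem_accepts, DFA.eval, prod_evalFrom]
  exact Iff.rfl

/-- The empty language is regular. -/
theorem isRegular_zero {α : Type} : (0 : Language α).IsRegular := by
  refine ⟨Unit, inferInstance, ⟨fun _ _ => (), (), ∅⟩, ?_⟩
  ext w
  rw [DFA.mem_accepts]
  simp



open List


/-- Preimage of a regular language under `List.map` is regular. -/
theorem isRegular_comap {α β : Type} (f : α → β) {L : Language β} (h : L.IsRegular) :
    Language.IsRegular {w | w.map f ∈ L} := by
  obtain ⟨σ, _, M, rfl⟩ := h
  exact ⟨σ, inferInstance, M.comap f, by rw [DFA.accepts_comap]; rfl⟩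

/-- Prepending a fixed letter preserves regularity. -/
theorem isRegular_consImage {α : Type} [DecidableEq α] (x : α) {L : Language α}
    (h : L.IsRegular) : Language.IsRegular {w | ∃ v ∈ L, w = x :: v} := by
  obtain ⟨σ, _, M, rfl⟩ := h
  let N : DFA α (Option (Option σ)) :=
    ⟨fun s c => match s with
      | none => none
      | some none => if c = x then some (some M.start) else none
      | some (some q) => some (some (M.step q c)),
     some none,
     {s | ∃ q ∈ M.accept, s = some (some q)}⟩
  have hdead : ∀ a, N.step none a = none := fun _ => rfl
  have hrun : ∀ (w : List α) (q : σ),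
      N.evalFrom (some (some q)) w = some (some (M.evalFrom q w)) := by
    intro w
    induction w with
    | nil => intro q; rfl
    | cons a w ih =>
      intro q
      show N.evalFrom (N.step (some (some q)) a) w = _
      show N.evalFrom (some (some (M.step q a))) w = _
      rw [ih]
      rfl
  refine ⟨Option (Option σ), inferInstance, N, ?_⟩
  ext w
  rw [DFA.mem_accepts]
  constructor
  · intro hw
    match w with
    | [] =>
      obtain ⟨q, _, hq⟩ := hw
      exact absurd hq (by show ¬ (some none = some (some q)); simp)
    | c :: v =>
      have : N.eval (c :: v) = N.evalFrom (N.step (some none) c) v := rfl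
      by_cases hc : c = x
      · subst hc
        rw [this] at hw
        have hstep : N.step (some none) c = some (some M.start) := by
          show (if c = c then _ else _) = _
          simp
        rw [hstep, hrun] at hw
        obtain ⟨q, hqacc, hq⟩ := hw
        refine ⟨v, ?_, rfl⟩
        rw [DFA.mem_accepts]
        have : M.evalFrom M.start v = q := by
          injection hq with h1; injection h1
        rw [DFA.eval, this]; exact hqacc
      · have hstep : N.step (some none) c = none := by
          show (if c = x then _ else _) = _
          simp [hc]
        rw [this, hstep, evalFrom_dead N hdead] at hw
        obtain ⟨q, _, hq⟩ := hw
        exact absurd hq (by simp)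
  · rintro ⟨v, hv, rfl⟩
    have hstep : N.step (some none) x = some (some M.start) := by
      show (if x = x then _ else _) = _
      simp
    show N.evalFrom (N.step (some none) x) v ∈ _
    rw [hstep, hrun]
    exact ⟨M.evalFrom M.start v, hv, rfl⟩



open List


/-- Double every letter of a word. -/
def dbl {α : Type} : List α → List α
  | [] => []
  | c :: w => c :: c :: dbl w

theorem dbl_replicate {α : Type} (c : α) : ∀ k, dbl (replicate k c) = replicate (2 * k) c
  | 0 => rfl
  | k + 1 => by
    rw [List.replicate_succ]
    show c :: c :: dbl (replicate k c) = _
    rw [dbl_replicate c k, show 2 * (k + 1) = (2 * k) + 1 + 1 by ring]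
    simp [List.replicate_succ]

theorem dbl_append {α : Type} : ∀ u v : List α, dbl (u ++ v) = dbl u ++ dbl v
  | [], v => rfl
  | c :: u, v => by
    show c :: c :: dbl (u ++ v) = (c :: c :: dbl u) ++ dbl v
    rw [dbl_append u v]; rfl

section DblDFA

variable {α σ : Type} [DecidableEq α] (M : DFA α σ)

/-- DFA recognizing the letter-doubled image of the language of `M`. -/
def dblDFA : DFA α (Option (σ × Option α)) :=
  ⟨fun s c => match s with
    | none => none
    | some (q, none) => some (q, some c)
    | some (q, some d) => if d = c then some (M.step q c, none) else none,
   some (M.start, none),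
   {s | ∃ q ∈ M.accept, s = some (q, none)}⟩

theorem dblDFA_dead : ∀ a, (dblDFA M).step none a = none := fun _ => rfl

theorem dblDFA_run : ∀ (w : List α) (q : σ),
    (dblDFA M).evalFrom (some (q, none)) (dbl w) = some (M.evalFrom q w, none)
  | [], q => rfl
  | c :: w, q => by
    show (dblDFA M).evalFrom ((dblDFA M).step ((dblDFA M).step (some (q, none)) c) c)
      (dbl w) = _
    have h1 : (dblDFA M).step (some (q, none)) c = some (q, some c) := rfl
    have h2 : (dblDFA M).step (some (q, some c)) c = some (M.step q c, none) := by
      show (if c = c then _ else _) = _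
      simp
    rw [h1, h2, dblDFA_run w (M.step q c)]
    rfl

theorem dblDFA_inv : ∀ (u : List α) (q q' : σ),
    (dblDFA M).evalFrom (some (q, none)) u = some (q', none) →
    ∃ w, u = dbl w ∧ M.evalFrom q w = q'
  | [], q, q', h => ⟨[], rfl, by
      simp only [DFA.evalFrom_nil, Option.some.injEq, Prod.mk.injEq] at h
      exact h.1⟩
  | [c], q, q', h => by
    exfalso
    have : (dblDFA M).evalFrom (some (q, none)) [c] = some (q, some c) := rfl
    rw [this] at h
    simp only [Option.some.injEq, Prod.mk.injEq] at h
    exact absurd h.2 (by simp)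
  | c :: d :: u, q, q', h => by
    have h1 : (dblDFA M).evalFrom (some (q, none)) (c :: d :: u)
        = (dblDFA M).evalFrom ((dblDFA M).step (some (q, some c)) d) u := rfl
    by_cases hcd : c = d
    · subst hcd
      have h2 : (dblDFA M).step (some (q, some c)) c = some (M.step q c, none) := by
        show (if c = c then _ else _) = _
        simp
      rw [h1, h2] at h
      obtain ⟨w, rfl, hw⟩ := dblDFA_inv u (M.step q c) q' h
      exact ⟨c :: w, rfl, hw⟩
    · exfalso
      have h2 : (dblDFA M).step (some (q, some c)) d = none := by
        show (if c = d then _ else _) = _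
        simp [hcd]
      rw [h1, h2, evalFrom_dead _ (dblDFA_dead M)] at h
      exact absurd h (by simp)

end DblDFA

/-- The letter-doubled image of a regular language is regular. -/
theorem isRegular_dblImage {α : Type} [DecidableEq α] [Fintype α] {L : Language α}
    (h : L.IsRegular) : Language.IsRegular {w | ∃ v ∈ L, w = dbl v} := by
  obtain ⟨σ, hσ, M, rfl⟩ := h
  letI := hσ
  refine ⟨Option (σ × Option α), inferInstance, dblDFA M, ?_⟩
  ext w
  rw [DFA.mem_accepts]
  constructor
  · rintro ⟨q, hqacc, hq⟩
    obtain ⟨v, rfl, hv⟩ := dblDFA_inv M w M.start q hq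
    exact ⟨v, by rw [DFA.mem_accepts, DFA.eval, hv]; exact hqacc, rfl⟩
  · rintro ⟨v, hv, rfl⟩
    show (dblDFA M).evalFrom (some (M.start, none)) (dbl v) ∈ _
    rw [dblDFA_run]
    exact ⟨M.evalFrom M.start v, hv, rfl⟩



open List

theorem convWord_ge {m n : ℕ} (h : n ≤ m) :
    convWord m n = replicate n 0 ++ replicate (m - n) 1 := by
  unfold convWord
  rw [min_eq_right h, Nat.sub_self]
  simp

theorem convWord_le {m n : ℕ} (h : m ≤ n) :
    convWord m n = replicate m 0 ++ replicate (n - m) 2 := by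
  unfold convWord
  rw [min_eq_left h, Nat.sub_self]
  simp

theorem convWord_inj {m n m' n' : ℕ} (h : convWord m n = convWord m' n') :
    m = m' ∧ n = n' := by
  have c0 := congrArg (List.count 0) h
  have c1 := congrArg (List.count 1) h
  have c2 := congrArg (List.count 2) h
  unfold convWord at c0 c1 c2
  simp [List.count_append, List.count_replicate] at c0 c1 c2
  omega

theorem mem_convLang {R : ℕ → ℕ → Prop} {m n : ℕ} :
    convWord m n ∈ convLang R ↔ R m n := by
  constructor
  · rintro ⟨m', n', hR, h⟩
    obtain ⟨rfl, rfl⟩ := convWord_inj h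
    exact hR
  · intro h; exact ⟨m, n, h, rfl⟩

/-- swap letters `1` and `2`. -/
def swp : Fin 3 → Fin 3 := ![0, 2, 1]

theorem map_swp_convWord (m n : ℕ) : (convWord m n).map swp = convWord n m := by
  rcases le_total m n with h | h
  · rw [convWord_le h, convWord_ge h]
    simp [List.map_replicate, swp]
  · rw [convWord_ge h, convWord_le h]
    simp [List.map_replicate, swp]

theorem map_swp_swp (w : List (Fin 3)) : (w.map swp).map swp = w := by
  rw [List.map_map]
  have : swp ∘ swp = id := by
    funext c
    fin_cases c <;> rfl
  rw [this, List.map_id]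

theorem convLang_congr {R S : ℕ → ℕ → Prop} (h : ∀ m n, R m n ↔ S m n) :
    convLang R = convLang S := by
  unfold convLang
  ext w
  constructor
  · rintro ⟨m, n, hmn, rfl⟩; exact ⟨m, n, (h m n).mp hmn, rfl⟩
  · rintro ⟨m, n, hmn, rfl⟩; exact ⟨m, n, (h m n).mpr hmn, rfl⟩

theorem regularRel_congr {R S : ℕ → ℕ → Prop} (h : ∀ m n, R m n ↔ S m n)
    (hR : RegularRel R) : RegularRel S := by
  unfold RegularRel at *
  rwa [convLang_congr h] at hR

theorem convLang_or (R S : ℕ → ℕ → Prop) :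
    convLang (fun m n => R m n ∨ S m n) = convLang R + convLang S := by
  ext w
  rw [Language.mem_add]
  constructor
  · rintro ⟨m, n, hmn | hmn, rfl⟩
    · exact Or.inl ⟨m, n, hmn, rfl⟩
    · exact Or.inr ⟨m, n, hmn, rfl⟩
  · rintro (⟨m, n, hmn, rfl⟩ | ⟨m, n, hmn, rfl⟩)
    · exact ⟨m, n, Or.inl hmn, rfl⟩
    · exact ⟨m, n, Or.inr hmn, rfl⟩


theorem regularRel_or {R S : ℕ → ℕ → Prop} (hR : RegularRel R) (hS : RegularRel S) :
    RegularRel (fun m n => R m n ∨ S m n) := by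
  unfold RegularRel
  rw [convLang_or]
  exact isRegular_union hR hS

theorem regularRel_flip {R : ℕ → ℕ → Prop} (hR : RegularRel R) :
    RegularRel (fun m n => R n m) := by
  have : convLang (fun m n => R n m) = {w | w.map swp ∈ convLang R} := by
    ext w
    constructor
    · rintro ⟨m, n, hmn, rfl⟩
      show (convWord m n).map swp ∈ convLang R
      rw [map_swp_convWord]
      exact ⟨n, m, hmn, rfl⟩
    · rintro ⟨m, n, hmn, h⟩
      refine ⟨n, m, hmn, ?_⟩
      have := congrArg (List.map swp) h
      rwa [map_swp_swp, map_swp_convWord] at this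
  unfold RegularRel
  rw [this]
  exact isRegular_comap swp hR

theorem dbl_convWord (m n : ℕ) : dbl (convWord m n) = convWord (2 * m) (2 * n) := by
  unfold convWord
  rw [dbl_append, dbl_append, dbl_replicate, dbl_replicate, dbl_replicate]
  rw [show min (2 * m) (2 * n) = 2 * min m n by omega,
    show 2 * m - 2 * min m n = 2 * (m - min m n) by omega,
    show 2 * n - 2 * min m n = 2 * (n - min m n) by omega]

theorem convWord_odd (m n : ℕ) :
    convWord (2 * m + 1) (2 * n + 1) = (0 : Fin 3) :: convWord (2 * m) (2 * n) := by
  unfold convWord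
  rw [show min (2 * m + 1) (2 * n + 1) = min (2 * m) (2 * n) + 1 by omega,
    show 2 * m + 1 - (min (2 * m) (2 * n) + 1) = 2 * m - min (2 * m) (2 * n) by omega,
    show 2 * n + 1 - (min (2 * m) (2 * n) + 1) = 2 * n - min (2 * m) (2 * n) by omega,
    List.replicate_succ]
  rfl

theorem regularRel_even {R : ℕ → ℕ → Prop} (hR : RegularRel R) :
    RegularRel (fun m n => m % 2 = 0 ∧ n % 2 = 0 ∧ R (m / 2) (n / 2)) := by
  have : convLang (fun m n => m % 2 = 0 ∧ n % 2 = 0 ∧ R (m / 2) (n / 2))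
      = {w | ∃ v ∈ convLang R, w = dbl v} := by
    ext w
    constructor
    · rintro ⟨m, n, ⟨hm, hn, hmn⟩, rfl⟩
      refine ⟨convWord (m / 2) (n / 2), ⟨_, _, hmn, rfl⟩, ?_⟩
      rw [dbl_convWord, show 2 * (m / 2) = m by omega, show 2 * (n / 2) = n by omega]
    · rintro ⟨v, ⟨a, b, hab, rfl⟩, rfl⟩
      refine ⟨2 * a, 2 * b, ⟨by omega, by omega, ?_⟩, dbl_convWord a b ▸ rfl⟩
      rw [show 2 * a / 2 = a by omega, show 2 * b / 2 = b by omega]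
      exact hab
  unfold RegularRel
  rw [this]
  exact isRegular_dblImage hR

theorem regularRel_odd {R : ℕ → ℕ → Prop} (hR : RegularRel R) :
    RegularRel (fun m n => m % 2 = 1 ∧ n % 2 = 1 ∧ R (m / 2) (n / 2)) := by
  have : convLang (fun m n => m % 2 = 1 ∧ n % 2 = 1 ∧ R (m / 2) (n / 2))
      = {w | ∃ v ∈ {u | ∃ x ∈ convLang R, u = dbl x}, w = (0 : Fin 3) :: v} := by
    ext w
    constructor
    · rintro ⟨m, n, ⟨hm, hn, hmn⟩, rfl⟩
      refine ⟨dbl (convWord (m / 2) (n / 2)), ⟨_, ⟨_, _, hmn, rfl⟩, rfl⟩, ?_⟩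
      rw [dbl_convWord, show m = 2 * (m / 2) + 1 by omega, show n = 2 * (n / 2) + 1 by omega,
        convWord_odd]
      congr 2 <;> omega
    · rintro ⟨v, ⟨u, ⟨a, b, hab, rfl⟩, rfl⟩, rfl⟩
      refine ⟨2 * a + 1, 2 * b + 1, ⟨by omega, by omega, ?_⟩, ?_⟩
      · rw [show (2 * a + 1) / 2 = a by omega, show (2 * b + 1) / 2 = b by omega]
        exact hab
      · rw [convWord_odd, dbl_convWord]
  unfold RegularRel
  rw [this]
  exact isRegular_consImage 0 (isRegular_dblImage hR)

theorem unit_list_eq (w : List Unit) : w = List.replicate w.length () := by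
  induction w with
  | nil => rfl
  | cons a w ih =>
    rw [List.length_cons, List.replicate_succ]
    exact congrArg (List.cons ()) ih

theorem mem_unaryLang {A : Set ℕ} {k : ℕ} :
    List.replicate k () ∈ unaryLang A ↔ k ∈ A := by
  unfold unaryLang
  show (List.replicate k ()).length ∈ A ↔ k ∈ A
  rw [List.length_replicate]

/-- Sections of regular relations (first coordinate) have regular unary languages. -/
theorem isRegular_section1 {R : ℕ → ℕ → Prop} (h : RegularRel R) (n₀ : ℕ) :
    (unaryLang {m | R m n₀}).IsRegular := by
  obtain ⟨σ, hσ, M, hM⟩ := h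
  letI := hσ
  let N : DFA Unit (Fin (n₀ + 1) ⊕ σ) :=
    ⟨fun s _ => match s with
      | Sum.inl k => if h : (k : ℕ) < n₀ then Sum.inl ⟨(k : ℕ) + 1, by omega⟩
          else Sum.inr (M.step (M.evalFrom M.start (List.replicate n₀ 0)) 1)
      | Sum.inr q => Sum.inr (M.step q 1),
     Sum.inl ⟨0, by omega⟩,
     {s | match s with
      | Sum.inl k => convWord (k : ℕ) n₀ ∈ M.accepts
      | Sum.inr q => q ∈ M.accept}⟩
  have key : ∀ m, N.eval (List.replicate m ()) =
      if h : m ≤ n₀ then Sum.inl ⟨m, by omega⟩ else Sum.inr (M.eval (convWord m n₀)) := by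
    intro m
    induction m with
    | zero => simp [DFA.eval]; rfl
    | succ m ih =>
      have : N.eval (List.replicate (m + 1) ()) = N.step (N.eval (List.replicate m ())) () := by
        rw [show m + 1 = m + 1 from rfl, List.replicate_add, List.replicate_one,
          DFA.eval, DFA.evalFrom_append_singleton]
      rw [this, ih]
      rcases Nat.lt_trichotomy m n₀ with hm | hm | hm
      · rw [dif_pos (by omega : m ≤ n₀), dif_pos (by omega : m + 1 ≤ n₀)]
        show (if h : m < n₀ then _ else _) = _
        rw [dif_pos hm]
      · subst hm
        rw [dif_pos (le_refl m), dif_neg (by omega)]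
        show (if h : m < m then _ else _) = _
        rw [dif_neg (by omega)]
        congr 1
        rw [convWord_ge (by omega : m ≤ m + 1), show m + 1 - m = 1 by omega,
          List.replicate_one, DFA.eval, DFA.evalFrom_append_singleton]
      · rw [dif_neg (by omega), dif_neg (by omega)]
        show Sum.inr (M.step (M.eval (convWord m n₀)) 1) = _
        congr 1
        rw [convWord_ge (by omega : n₀ ≤ m + 1), convWord_ge (by omega : n₀ ≤ m),
          show m + 1 - n₀ = (m - n₀) + 1 by omega, List.replicate_add, List.replicate_one,
          ← List.append_assoc, DFA.eval, DFA.evalFrom_append_singleton]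
  refine ⟨Fin (n₀ + 1) ⊕ σ, inferInstance, N, ?_⟩
  ext w
  rw [unit_list_eq w, mem_unaryLang, DFA.mem_accepts, key, Set.mem_setOf_eq]
  by_cases h : w.length ≤ n₀
  · rw [dif_pos h]
    show convWord w.length n₀ ∈ M.accepts ↔ _
    rw [hM, mem_convLang]
    exact Iff.rfl
  · rw [dif_neg h]
    show M.eval (convWord w.length n₀) ∈ M.accept ↔ _
    rw [← DFA.mem_accepts, hM, mem_convLang]
    exact Iff.rfl

theorem isRegular_section2 {R : ℕ → ℕ → Prop} (h : RegularRel R) (m₀ : ℕ) :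
    (unaryLang {n | R m₀ n}).IsRegular :=
  isRegular_section1 (regularRel_flip h) m₀

theorem fin3_eq (c : Fin 3) : c = 0 ∨ c = 1 ∨ c = 2 := by
  rcases c with ⟨cv, hcv⟩
  interval_cases cv
  · exact Or.inl rfl
  · exact Or.inr (Or.inl rfl)
  · exact Or.inr (Or.inr rfl)

section RectDFA

variable {σP σQ : Type} (P : DFA Unit σP) (Q : DFA Unit σQ)

/-- DFA for the rectangle relation. Mode `0`: reading `s`; `1`: reading `l`; `2`: reading `r`. -/
def rectDFA : DFA (Fin 3) (Option (σP × σQ × Fin 3)) :=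
  ⟨fun s c => match s with
    | none => none
    | some (p, q, m) =>
      if m = 0 ∧ c = 0 then some (P.step p (), Q.step q (), 0)
      else if (m = 0 ∨ m = 1) ∧ c = 1 then some (P.step p (), q, 1)
      else if (m = 0 ∨ m = 2) ∧ c = 2 then some (p, Q.step q (), 2)
      else none,
   some (P.start, Q.start, 0),
   {s | ∃ p q m, p ∈ P.accept ∧ q ∈ Q.accept ∧ s = some (p, q, m)}⟩

theorem rectDFA_dead : ∀ a, (rectDFA P Q).step none a = none := fun _ => rfl

theorem rect_step00 (p q) : (rectDFA P Q).step (some (p, q, 0)) 0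
    = some (P.step p (), Q.step q (), 0) := by simp [rectDFA]
theorem rect_step01 (p q) : (rectDFA P Q).step (some (p, q, 0)) 1
    = some (P.step p (), q, 1) := by simp [rectDFA]
theorem rect_step02 (p q) : (rectDFA P Q).step (some (p, q, 0)) 2
    = some (p, Q.step q (), 2) := by simp [rectDFA]
theorem rect_step10 (p q) : (rectDFA P Q).step (some (p, q, 1)) 0 = none := by simp [rectDFA]
theorem rect_step11 (p q) : (rectDFA P Q).step (some (p, q, 1)) 1
    = some (P.step p (), q, 1) := by simp [rectDFA]
theorem rect_step12 (p q) : (rectDFA P Q).step (some (p, q, 1)) 2 = none := by simp [rectDFA]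
theorem rect_step20 (p q) : (rectDFA P Q).step (some (p, q, 2)) 0 = none := by simp [rectDFA]
theorem rect_step21 (p q) : (rectDFA P Q).step (some (p, q, 2)) 1 = none := by simp [rectDFA]
theorem rect_step22 (p q) : (rectDFA P Q).step (some (p, q, 2)) 2
    = some (p, Q.step q (), 2) := by simp [rectDFA]

theorem rect_run0 : ∀ (k : ℕ) (p : σP) (q : σQ),
    (rectDFA P Q).evalFrom (some (p, q, 0)) (List.replicate k 0)
      = some (P.evalFrom p (List.replicate k ()), Q.evalFrom q (List.replicate k ()), 0)
  | 0, p, q => rfl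
  | k + 1, p, q => by
    rw [List.replicate_succ]
    show (rectDFA P Q).evalFrom ((rectDFA P Q).step (some (p, q, 0)) 0) _ = _
    rw [rect_step00, rect_run0 k]
    rfl

theorem rect_run1 : ∀ (i : ℕ) (p : σP) (q : σQ),
    (rectDFA P Q).evalFrom (some (p, q, 1)) (List.replicate i 1)
      = some (P.evalFrom p (List.replicate i ()), q, 1)
  | 0, p, q => rfl
  | i + 1, p, q => by
    rw [List.replicate_succ]
    show (rectDFA P Q).evalFrom ((rectDFA P Q).step (some (p, q, 1)) 1) _ = _
    rw [rect_step11, rect_run1 i]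
    rfl

theorem rect_run2 : ∀ (i : ℕ) (p : σP) (q : σQ),
    (rectDFA P Q).evalFrom (some (p, q, 2)) (List.replicate i 2)
      = some (p, Q.evalFrom q (List.replicate i ()), 2)
  | 0, p, q => rfl
  | i + 1, p, q => by
    rw [List.replicate_succ]
    show (rectDFA P Q).evalFrom ((rectDFA P Q).step (some (p, q, 2)) 2) _ = _
    rw [rect_step22, rect_run2 i]
    rfl

theorem rect_shape1 : ∀ (u : List (Fin 3)) (p : σP) (q : σQ),
    (rectDFA P Q).evalFrom (some (p, q, 1)) u ≠ none → ∃ i, u = List.replicate i 1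
  | [], _, _, _ => ⟨0, rfl⟩
  | c :: u, p, q, h => by
    have hstep : (rectDFA P Q).evalFrom (some (p, q, 1)) (c :: u)
        = (rectDFA P Q).evalFrom ((rectDFA P Q).step (some (p, q, 1)) c) u := rfl
    rcases fin3_eq c with rfl | rfl | rfl
    · rw [hstep, rect_step10, evalFrom_dead _ (rectDFA_dead P Q)] at h
      exact absurd rfl h
    · rw [hstep, rect_step11] at h
      obtain ⟨i, rfl⟩ := rect_shape1 u (P.step p ()) q h
      exact ⟨i + 1, by rw [List.replicate_succ]⟩
    · rw [hstep, rect_step12, evalFrom_dead _ (rectDFA_dead P Q)] at h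
      exact absurd rfl h

theorem rect_shape2 : ∀ (u : List (Fin 3)) (p : σP) (q : σQ),
    (rectDFA P Q).evalFrom (some (p, q, 2)) u ≠ none → ∃ i, u = List.replicate i 2
  | [], _, _, _ => ⟨0, rfl⟩
  | c :: u, p, q, h => by
    have hstep : (rectDFA P Q).evalFrom (some (p, q, 2)) (c :: u)
        = (rectDFA P Q).evalFrom ((rectDFA P Q).step (some (p, q, 2)) c) u := rfl
    rcases fin3_eq c with rfl | rfl | rfl
    · rw [hstep, rect_step20, evalFrom_dead _ (rectDFA_dead P Q)] at h
      exact absurd rfl h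
    · rw [hstep, rect_step21, evalFrom_dead _ (rectDFA_dead P Q)] at h
      exact absurd rfl h
    · rw [hstep, rect_step22] at h
      obtain ⟨i, rfl⟩ := rect_shape2 u p (Q.step q ()) h
      exact ⟨i + 1, by rw [List.replicate_succ]⟩

theorem rect_shape0 : ∀ (u : List (Fin 3)) (p : σP) (q : σQ),
    (rectDFA P Q).evalFrom (some (p, q, 0)) u ≠ none →
      (∃ k i, u = List.replicate k 0 ++ List.replicate i 1) ∨
      (∃ k i, u = List.replicate k 0 ++ List.replicate i 2)
  | [], _, _, _ => Or.inl ⟨0, 0, rfl⟩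
  | c :: u, p, q, h => by
    have hstep : (rectDFA P Q).evalFrom (some (p, q, 0)) (c :: u)
        = (rectDFA P Q).evalFrom ((rectDFA P Q).step (some (p, q, 0)) c) u := rfl
    rcases fin3_eq c with rfl | rfl | rfl
    · rw [hstep, rect_step00] at h
      rcases rect_shape0 u (P.step p ()) (Q.step q ()) h with ⟨k, i, rfl⟩ | ⟨k, i, rfl⟩
      · exact Or.inl ⟨k + 1, i, by rw [List.replicate_succ]; rfl⟩
      · exact Or.inr ⟨k + 1, i, by rw [List.replicate_succ]; rfl⟩
    · rw [hstep, rect_step01] at h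
      obtain ⟨i, rfl⟩ := rect_shape1 P Q u (P.step p ()) q h
      exact Or.inl ⟨0, i + 1, by rw [List.replicate_succ]; rfl⟩
    · rw [hstep, rect_step02] at h
      obtain ⟨i, rfl⟩ := rect_shape2 P Q u p (Q.step q ()) h
      exact Or.inr ⟨0, i + 1, by rw [List.replicate_succ]; rfl⟩

theorem rect_mem_accept {p q m} :
    some (p, q, m) ∈ (rectDFA P Q).accept ↔ p ∈ P.accept ∧ q ∈ Q.accept := by
  constructor
  · rintro ⟨p', q', m', hp, hq, hs⟩
    simp only [Option.some.injEq, Prod.mk.injEq] at hs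
    obtain ⟨rfl, rfl, rfl⟩ := hs
    exact ⟨hp, hq⟩
  · rintro ⟨hp, hq⟩
    exact ⟨p, q, m, hp, hq, rfl⟩

/-- Evaluation of the rectangle DFA on a word `0^k 1^i`. -/
theorem rect_eval_l (k i : ℕ) :
    (rectDFA P Q).eval (List.replicate k 0 ++ List.replicate i 1)
      = some (P.eval (List.replicate (k + i) ()),
          Q.eval (List.replicate k ()), if i = 0 then 0 else 1) := by
  rw [DFA.eval, DFA.evalFrom_of_append]
  show (rectDFA P Q).evalFrom ((rectDFA P Q).evalFrom (some (P.start, Q.start, 0)) _) _ = _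
  rw [rect_run0]
  cases i with
  | zero => simp [DFA.eval]
  | succ i =>
    rw [List.replicate_succ]
    show (rectDFA P Q).evalFrom ((rectDFA P Q).step (some (_, _, 0)) 1) _ = _
    rw [rect_step01, rect_run1]
    have : P.evalFrom (P.step (P.evalFrom P.start (List.replicate k ())) ())
        (List.replicate i ()) = P.eval (List.replicate (k + (i + 1)) ()) := by
      rw [show k + (i + 1) = k + 1 + i by omega, List.replicate_add, DFA.eval,
        DFA.evalFrom_of_append, List.replicate_add, List.replicate_one,
        DFA.evalFrom_of_append, DFA.evalFrom_singleton]
    rw [this]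
    simp [DFA.eval]

theorem rect_eval_r (k i : ℕ) :
    (rectDFA P Q).eval (List.replicate k 0 ++ List.replicate i 2)
      = some (P.eval (List.replicate k ()),
          Q.eval (List.replicate (k + i) ()), if i = 0 then 0 else 2) := by
  rw [DFA.eval, DFA.evalFrom_of_append]
  show (rectDFA P Q).evalFrom ((rectDFA P Q).evalFrom (some (P.start, Q.start, 0)) _) _ = _
  rw [rect_run0]
  cases i with
  | zero => simp [DFA.eval]
  | succ i =>
    rw [List.replicate_succ]
    show (rectDFA P Q).evalFrom ((rectDFA P Q).step (some (_, _, 0)) 2) _ = _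
    rw [rect_step02, rect_run2]
    have : Q.evalFrom (Q.step (Q.evalFrom Q.start (List.replicate k ())) ())
        (List.replicate i ()) = Q.eval (List.replicate (k + (i + 1)) ()) := by
      rw [show k + (i + 1) = k + 1 + i by omega, List.replicate_add, DFA.eval,
        DFA.evalFrom_of_append, List.replicate_add, List.replicate_one,
        DFA.evalFrom_of_append, DFA.evalFrom_singleton]
    rw [this]
    simp [DFA.eval]

end RectDFA

/-- Rectangle relations are regular. -/
theorem regularRel_rect {A B : Set ℕ} (hA : (unaryLang A).IsRegular)
    (hB : (unaryLang B).IsRegular) : RegularRel (fun m n => m ∈ A ∧ n ∈ B) := by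
  obtain ⟨σP, hP, P, hPacc⟩ := hA
  obtain ⟨σQ, hQ, Q, hQacc⟩ := hB
  letI := hP; letI := hQ
  have hPA : ∀ k, P.eval (List.replicate k ()) ∈ P.accept ↔ k ∈ A := by
    intro k
    rw [← DFA.mem_accepts, hPacc, mem_unaryLang]
  have hQB : ∀ k, Q.eval (List.replicate k ()) ∈ Q.accept ↔ k ∈ B := by
    intro k
    rw [← DFA.mem_accepts, hQacc, mem_unaryLang]
  refine ⟨Option (σP × σQ × Fin 3), inferInstance, rectDFA P Q, ?_⟩
  ext w
  rw [DFA.mem_accepts]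
  constructor
  · intro hw
    have hne : (rectDFA P Q).eval w ≠ none := by
      intro hnone
      rw [hnone] at hw
      obtain ⟨p, q, m, _, _, hs⟩ := hw
      exact absurd hs (by simp)
    rcases rect_shape0 P Q w P.start Q.start hne with ⟨k, i, rfl⟩ | ⟨k, i, rfl⟩
    · rw [rect_eval_l] at hw
      rw [rect_mem_accept, hPA, hQB] at hw
      exact ⟨k + i, k, hw, by rw [convWord_ge (by omega), show k + i - k = i by omega]⟩
    · rw [rect_eval_r] at hw
      rw [rect_mem_accept, hPA, hQB] at hw
      exact ⟨k, k + i, ⟨hw.1, hw.2⟩, by rw [convWord_le (by omega), show k + i - k = i by omega]⟩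
  · rintro ⟨m, n, ⟨hm, hn⟩, rfl⟩
    rcases le_total n m with h | h
    · rw [convWord_ge h, show m = n + (m - n) by omega]
      rw [show n + (m - n) - n = m - n by omega, rect_eval_l, rect_mem_accept, hPA, hQB]
      exact ⟨by rw [show n + (m - n) = m by omega]; exact hm, hn⟩
    · rw [convWord_le h, rect_eval_r, rect_mem_accept, hPA, hQB]
      exact ⟨hm, by rw [show m + (n - m) = n by omega]; exact hn⟩

section Parity

variable {σ : Type} (P : DFA Unit σ)

/-- DFA tracking a half-speed copy of `P`. -/
def halfDFA : DFA Unit (σ × Bool) :=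
  ⟨fun s _ => (if s.2 then P.step s.1 () else s.1, !s.2), (P.start, false), ∅⟩

theorem halfDFA_key : ∀ k, (halfDFA P).evalFrom (P.start, false) (List.replicate k ())
    = (P.eval (List.replicate (k / 2) ()), decide (k % 2 = 1))
  | 0 => by simp [DFA.eval]
  | k + 1 => by
    rw [show k + 1 = k + 1 from rfl, List.replicate_add, List.replicate_one,
      DFA.evalFrom_append_singleton, halfDFA_key k]
    rcases Nat.mod_two_eq_zero_or_one k with h | h
    · rw [show decide (k % 2 = 1) = false by simp [h],
        show (k + 1) / 2 = k / 2 by omega,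
        show decide ((k + 1) % 2 = 1) = true by simp; omega]
      rfl
    · rw [show decide (k % 2 = 1) = true by simp [h],
        show decide ((k + 1) % 2 = 1) = false by simp; omega,
        show (k + 1) / 2 = k / 2 + 1 by omega,
        show List.replicate (k / 2 + 1) () = List.replicate (k / 2) () ++ [()] by
          rw [List.replicate_add]; rfl,
        DFA.eval, DFA.evalFrom_append_singleton]
      rfl

end Parity

theorem isRegular_unary_even {A : Set ℕ} (h : (unaryLang A).IsRegular) :
    (unaryLang {n | n % 2 = 0 ∧ n / 2 ∈ A}).IsRegular := by
  obtain ⟨σ, hσ, P, hP⟩ := h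
  letI := hσ
  refine ⟨σ × Bool, inferInstance,
    ⟨(halfDFA P).step, (halfDFA P).start, {s | s.2 = false ∧ s.1 ∈ P.accept}⟩, ?_⟩
  ext w
  rw [unit_list_eq w, mem_unaryLang, DFA.mem_accepts]
  show (halfDFA P).evalFrom (P.start, false) _ ∈ _ ↔ _
  rw [halfDFA_key]
  simp only [Set.mem_setOf_eq, decide_eq_false_iff_not]
  constructor
  · rintro ⟨h1, h2⟩
    refine ⟨by omega, ?_⟩
    rw [← mem_unaryLang (A := A), ← hP]
    exact h2
  · rintro ⟨h1, h2⟩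
    refine ⟨by omega, ?_⟩
    rw [← DFA.mem_accepts, hP, mem_unaryLang]
    exact h2

theorem isRegular_unary_odd {A : Set ℕ} (h : (unaryLang A).IsRegular) :
    (unaryLang {n | n % 2 = 1 ∧ n / 2 ∈ A}).IsRegular := by
  obtain ⟨σ, hσ, P, hP⟩ := h
  letI := hσ
  refine ⟨σ × Bool, inferInstance,
    ⟨(halfDFA P).step, (halfDFA P).start, {s | s.2 = true ∧ s.1 ∈ P.accept}⟩, ?_⟩
  ext w
  rw [unit_list_eq w, mem_unaryLang, DFA.mem_accepts]
  show (halfDFA P).evalFrom (P.start, false) _ ∈ _ ↔ _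
  rw [halfDFA_key]
  simp only [Set.mem_setOf_eq, decide_eq_true_eq]
  constructor
  · rintro ⟨h1, h2⟩
    refine ⟨h1, ?_⟩
    rw [← mem_unaryLang (A := A), ← hP]
    exact h2
  · rintro ⟨h1, h2⟩
    refine ⟨h1, ?_⟩
    rw [← DFA.mem_accepts, hP, mem_unaryLang]
    exact h2

theorem unaryLang_union (A B : Set ℕ) :
    unaryLang (A ∪ B) = unaryLang A + unaryLang B := by
  ext w
  rw [Language.mem_add]
  exact Set.mem_union _ _ _

theorem isRegular_unary_union {A B : Set ℕ} (hA : (unaryLang A).IsRegular)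
    (hB : (unaryLang B).IsRegular) : (unaryLang (A ∪ B)).IsRegular := by
  rw [unaryLang_union]
  exact isRegular_union hA hB

theorem isRegular_unary_empty : (unaryLang (∅ : Set ℕ)).IsRegular := by
  have : unaryLang (∅ : Set ℕ) = 0 := by
    ext w
    simp [unaryLang]
    intro h
    exact h
  rw [this]
  exact isRegular_zero

/-- Intersecting a unary-regular set with a (nondecidable) condition. -/
theorem isRegular_unary_cond {A : Set ℕ} (p : Prop) (h : (unaryLang A).IsRegular) :
    (unaryLang {n | n ∈ A ∧ p}).IsRegular := by
  by_cases hp : p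
  · have : {n | n ∈ A ∧ p} = A := by ext n; simp [hp]
    rwa [this]
  · have : {n | n ∈ A ∧ p} = ∅ := by ext n; simp [hp]
    rw [this]
    exact isRegular_unary_empty



section Attach

variable {G T : Type*} (γ : G → G → Prop) (η : T → T → Prop) (g : G) (t : T)

theorem attachRel_iff (a b : G ⊕ T) :
    attachRel g t a b ↔
      a = b ∨ (a = Sum.inl g ∧ b = Sum.inr t) ∨ (a = Sum.inr t ∧ b = Sum.inl g) := by
  constructor
  · intro h
    induction h with
    | rel x y hxy => exact Or.inr (Or.inl hxy)
    | refl x => exact Or.inl rfl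
    | symm x y _ ih => rcases ih with h | ⟨h1, h2⟩ | ⟨h1, h2⟩ <;> simp_all
    | trans x y z _ _ ih1 ih2 =>
      rcases ih1 with h | ⟨h1, h2⟩ | ⟨h1, h2⟩ <;>
        rcases ih2 with h' | ⟨h1', h2'⟩ | ⟨h1', h2'⟩ <;> simp_all
  · rintro (rfl | ⟨rfl, rfl⟩ | ⟨rfl, rfl⟩)
    · exact Relation.EqvGen.refl _
    · exact Relation.EqvGen.rel _ _ ⟨rfl, rfl⟩
    · exact Relation.EqvGen.symm _ _ (Relation.EqvGen.rel _ _ ⟨rfl, rfl⟩)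

theorem mk_eq_iff (a b : G ⊕ T) :
    (Quotient.mk (attachSetoid g t) a = Quotient.mk (attachSetoid g t) b) ↔
      a = b ∨ (a = Sum.inl g ∧ b = Sum.inr t) ∨ (a = Sum.inr t ∧ b = Sum.inl g) := by
  rw [Quotient.eq]
  exact attachRel_iff g t a b

theorem mk_ll (u v : G) : (Quotient.mk (attachSetoid g t) (Sum.inl u : G ⊕ T)
    = Quotient.mk (attachSetoid g t) (Sum.inl v)) ↔ u = v := by
  rw [mk_eq_iff]; simp

theorem mk_lr (u : G) (w : T) : (Quotient.mk (attachSetoid g t) (Sum.inl u : G ⊕ T)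
    = Quotient.mk (attachSetoid g t) (Sum.inr w)) ↔ u = g ∧ w = t := by
  rw [mk_eq_iff]; simp

theorem mk_rl (w : T) (v : G) : (Quotient.mk (attachSetoid g t) (Sum.inr w : G ⊕ T)
    = Quotient.mk (attachSetoid g t) (Sum.inl v)) ↔ w = t ∧ v = g := by
  rw [mk_eq_iff]
  simp

theorem mk_rr (w w' : T) : (Quotient.mk (attachSetoid g t) (Sum.inr w : G ⊕ T)
    = Quotient.mk (attachSetoid g t) (Sum.inr w')) ↔ w = w' := by
  rw [mk_eq_iff]; simp

theorem edge_ll (x y : G) :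
    attachEdge γ η g t (Quotient.mk (attachSetoid g t) (Sum.inl x))
      (Quotient.mk (attachSetoid g t) (Sum.inl y)) ↔
    γ x y ∨ (x = g ∧ y = g ∧ η t t) := by
  unfold attachEdge
  constructor
  · rintro (⟨u, v, h1, h2, hr⟩ | ⟨u, v, h1, h2, hr⟩)
    · rw [mk_ll] at h1 h2
      subst h1; subst h2
      exact Or.inl hr
    · rw [mk_rl] at h1 h2
      obtain ⟨rfl, rfl⟩ := h1
      obtain ⟨rfl, rfl⟩ := h2
      exact Or.inr ⟨rfl, rfl, hr⟩
  · rintro (hr | ⟨h1, h2, hr⟩)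
    · exact Or.inl ⟨x, y, rfl, rfl, hr⟩
    · subst h1; subst h2
      refine Or.inr ⟨t, t, ?_, ?_, hr⟩ <;> (rw [mk_rl]; exact ⟨rfl, rfl⟩)

theorem edge_lr (x : G) (w : T) :
    attachEdge γ η g t (Quotient.mk (attachSetoid g t) (Sum.inl x))
      (Quotient.mk (attachSetoid g t) (Sum.inr w)) ↔
    (γ x g ∧ w = t) ∨ (x = g ∧ η t w) := by
  unfold attachEdge
  constructor
  · rintro (⟨u, v, h1, h2, hr⟩ | ⟨u, v, h1, h2, hr⟩)
    · rw [mk_ll] at h1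
      rw [mk_lr] at h2
      subst h1
      obtain ⟨rfl, rfl⟩ := h2
      exact Or.inl ⟨hr, rfl⟩
    · rw [mk_rl] at h1
      rw [mk_rr] at h2
      obtain ⟨rfl, rfl⟩ := h1
      subst h2
      exact Or.inr ⟨rfl, hr⟩
  · rintro (⟨hr, h2⟩ | ⟨h1, hr⟩)
    · subst h2
      refine Or.inl ⟨x, g, rfl, ?_, hr⟩
      rw [mk_lr]; exact ⟨rfl, rfl⟩
    · subst h1
      refine Or.inr ⟨t, w, ?_, rfl, hr⟩
      rw [mk_rl]; exact ⟨rfl, rfl⟩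

theorem edge_rl (w : T) (y : G) :
    attachEdge γ η g t (Quotient.mk (attachSetoid g t) (Sum.inr w))
      (Quotient.mk (attachSetoid g t) (Sum.inl y)) ↔
    (w = t ∧ γ g y) ∨ (η w t ∧ y = g) := by
  unfold attachEdge
  constructor
  · rintro (⟨u, v, h1, h2, hr⟩ | ⟨u, v, h1, h2, hr⟩)
    · rw [mk_lr] at h1
      rw [mk_ll] at h2
      obtain ⟨rfl, rfl⟩ := h1
      subst h2
      exact Or.inl ⟨rfl, hr⟩
    · rw [mk_rr] at h1
      rw [mk_rl] at h2
      subst h1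
      obtain ⟨rfl, rfl⟩ := h2
      exact Or.inr ⟨hr, rfl⟩
  · rintro (⟨h1, hr⟩ | ⟨hr, h2⟩)
    · subst h1
      refine Or.inl ⟨g, y, ?_, rfl, hr⟩
      rw [mk_lr]; exact ⟨rfl, rfl⟩
    · subst h2
      refine Or.inr ⟨w, t, rfl, ?_, hr⟩
      rw [mk_rl]; exact ⟨rfl, rfl⟩

theorem edge_rr (w w' : T) :
    attachEdge γ η g t (Quotient.mk (attachSetoid g t) (Sum.inr w))
      (Quotient.mk (attachSetoid g t) (Sum.inr w')) ↔
    η w w' ∨ (w = t ∧ w' = t ∧ γ g g) := by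
  unfold attachEdge
  constructor
  · rintro (⟨u, v, h1, h2, hr⟩ | ⟨u, v, h1, h2, hr⟩)
    · rw [mk_lr] at h1 h2
      obtain ⟨rfl, rfl⟩ := h1
      obtain ⟨rfl, rfl⟩ := h2
      exact Or.inr ⟨rfl, rfl, hr⟩
    · rw [mk_rr] at h1 h2
      subst h1; subst h2
      exact Or.inl hr
  · rintro (hr | ⟨h1, h2, hr⟩)
    · exact Or.inr ⟨w, w', rfl, rfl, hr⟩
    · subst h1; subst h2
      refine Or.inl ⟨g, g, ?_, ?_, hr⟩ <;> (rw [mk_lr]; exact ⟨rfl, rfl⟩)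

end Attach


end Stmt7Aux

open Stmt7Aux in
theorem stmt7 {G T : Type*} [Countable G] [Countable T]
    (γ : G → G → Prop) (η : T → T → Prop)
    (hG : UnaryFAPresentable γ) (hT : UnaryFAPresentable η)
    (g : G) (t : T) :
    UnaryFAPresentable (attachEdge γ η g t) := by
  obtain ⟨LG, hLG, φG, hsurjG, hEG, hRG⟩ := hG
  obtain ⟨LT, hLT, φT, hsurjT, hET, hRT⟩ := hT
  obtain ⟨m₀, hm₀L, hm₀⟩ := hsurjG g
  obtain ⟨n₀, hn₀L, hn₀⟩ := hsurjT t
  -- unary regularity of the basic sets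
  have hSg : (unaryLang {m | m ∈ LG ∧ φG m = g}).IsRegular := by
    have h := isRegular_section1 hEG m₀
    have he : {m | m ∈ LG ∧ m₀ ∈ LG ∧ φG m = φG m₀} = {m | m ∈ LG ∧ φG m = g} := by
      ext m; simp [hm₀, hm₀L]
    rwa [he] at h
  have hSt : (unaryLang {n | n ∈ LT ∧ φT n = t}).IsRegular := by
    have h := isRegular_section1 hET n₀
    have he : {n | n ∈ LT ∧ n₀ ∈ LT ∧ φT n = φT n₀} = {n | n ∈ LT ∧ φT n = t} := by
      ext n; simp [hn₀, hn₀L]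
    rwa [he] at h
  have hSγg : (unaryLang {m | m ∈ LG ∧ γ (φG m) g}).IsRegular := by
    have h := isRegular_section1 hRG m₀
    have he : {m | m ∈ LG ∧ m₀ ∈ LG ∧ γ (φG m) (φG m₀)} = {m | m ∈ LG ∧ γ (φG m) g} := by
      ext m; simp [hm₀, hm₀L]
    rwa [he] at h
  have hSgγ : (unaryLang {m | m ∈ LG ∧ γ g (φG m)}).IsRegular := by
    have h := isRegular_section2 hRG m₀
    have he : {m | m₀ ∈ LG ∧ m ∈ LG ∧ γ (φG m₀) (φG m)} = {m | m ∈ LG ∧ γ g (φG m)} := by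
      ext m; simp [hm₀, hm₀L]
    rwa [he] at h
  have hStη : (unaryLang {n | n ∈ LT ∧ η (φT n) t}).IsRegular := by
    have h := isRegular_section1 hRT n₀
    have he : {n | n ∈ LT ∧ n₀ ∈ LT ∧ η (φT n) (φT n₀)} = {n | n ∈ LT ∧ η (φT n) t} := by
      ext n; simp [hn₀, hn₀L]
    rwa [he] at h
  have hSηt : (unaryLang {n | n ∈ LT ∧ η t (φT n)}).IsRegular := by
    have h := isRegular_section2 hRT n₀
    have he : {n | n₀ ∈ LT ∧ n ∈ LT ∧ η (φT n₀) (φT n)} = {n | n ∈ LT ∧ η t (φT n)} := by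
      ext n; simp [hn₀, hn₀L]
    rwa [he] at h
  have hSgc : (unaryLang {m | m ∈ {m | m ∈ LG ∧ φG m = g} ∧ η t t}).IsRegular :=
    isRegular_unary_cond (η t t) hSg
  have hStc : (unaryLang {n | n ∈ {n | n ∈ LT ∧ φT n = t} ∧ γ g g}).IsRegular :=
    isRegular_unary_cond (γ g g) hSt
  refine ⟨{n | (n % 2 = 0 ∧ n / 2 ∈ LG) ∨ (n % 2 = 1 ∧ n / 2 ∈ LT)}, ?_,
    fun n => if n % 2 = 0 then Quotient.mk (attachSetoid g t) (Sum.inl (φG (n / 2)))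
      else Quotient.mk (attachSetoid g t) (Sum.inr (φT (n / 2))), ?_, ?_, ?_⟩
  · -- the language is regular
    exact isRegular_unary_union (isRegular_unary_even hLG) (isRegular_unary_odd hLT)
  · -- surjectivity
    intro x
    induction x using Quotient.inductionOn with
    | h a =>
      rcases a with u | w
      · obtain ⟨m, hmL, hm⟩ := hsurjG u
        refine ⟨2 * m, Or.inl ⟨by omega, by rw [show 2 * m / 2 = m by omega]; exact hmL⟩, ?_⟩
        simp only []
        rw [if_pos (show 2 * m % 2 = 0 by omega), show 2 * m / 2 = m by omega, hm]
      · obtain ⟨m, hmL, hm⟩ := hsurjT w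
        refine ⟨2 * m + 1, Or.inr ⟨by omega,
          by rw [show (2 * m + 1) / 2 = m by omega]; exact hmL⟩, ?_⟩
        simp only []
        rw [if_neg (show ¬(2 * m + 1) % 2 = 0 by omega), show (2 * m + 1) / 2 = m by omega, hm]
  · -- equality relation is regular
    refine regularRel_congr (fun m n => ?_)
      (regularRel_or (regularRel_even hEG)
        (regularRel_or (regularRel_odd hET)
          (regularRel_or (regularRel_rect (isRegular_unary_even hSg) (isRegular_unary_odd hSt))
            (regularRel_rect (isRegular_unary_odd hSt) (isRegular_unary_even hSg)))))
    rcases Nat.mod_two_eq_zero_or_one m with hm | hm <;>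
      rcases Nat.mod_two_eq_zero_or_one n with hn | hn <;>
      simp only [hm, hn, Set.mem_setOf_eq, if_pos, if_neg, reduceIte,
        zero_ne_one, one_ne_zero, false_and, and_false, true_and, and_true, or_false,
        false_or, mk_ll, mk_lr, mk_rl, mk_rr] <;>
      tauto
  · -- edge relation is regular
    refine regularRel_congr (fun m n => ?_)
      (regularRel_or (regularRel_even hRG)
        (regularRel_or (regularRel_rect (isRegular_unary_even hSgc) (isRegular_unary_even hSg))
          (regularRel_or (regularRel_odd hRT)
            (regularRel_or (regularRel_rect (isRegular_unary_odd hStc) (isRegular_unary_odd hSt))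
              (regularRel_or (regularRel_rect (isRegular_unary_even hSγg) (isRegular_unary_odd hSt))
                (regularRel_or (regularRel_rect (isRegular_unary_even hSg) (isRegular_unary_odd hSηt))
                  (regularRel_or (regularRel_rect (isRegular_unary_odd hSt) (isRegular_unary_even hSgγ))
                    (regularRel_rect (isRegular_unary_odd hStη) (isRegular_unary_even hSg)))))))))
    rcases Nat.mod_two_eq_zero_or_one m with hm | hm <;>
      rcases Nat.mod_two_eq_zero_or_one n with hn | hn <;>
      simp only [hm, hn, Set.mem_setOf_eq, if_pos, if_neg, reduceIte,
        zero_ne_one, one_ne_zero, false_and, and_false, true_and, and_true, or_false,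
        false_or, edge_ll, edge_lr, edge_rl, edge_rr] <;>
      tauto
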